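/- Let H be a Hilbert space and let u₁, …, u_N, v₁, …, v_N ∈ H with ‖u_j − v_j‖ < ς for all j. Let P_U and P_V denote the orthogonal projections onto span{u_j} and span{v_j} respectively, and assume {u_j} is linearly independent with Gram matrix bounded below by c·Id for some c > 0. Then there exists a constant C depending only on c, N, and max_j ‖u_j‖ such that ‖P_U h − P_V h‖ ≤ Cς‖h‖ for all h ∈ H, provided ς is sufficiently small. -/

import Mathlib

lemma normSqExpand {H : Type*} [NormedAddCommGroup H] [InnerProductSpace ℝ H] {N : ℕ}
    (u : Fin N → H) (a : Fin N → ℝ) :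
    ‖∑ i, a i • u i‖ ^ 2 = ∑ i, ∑ j, a i * a j * (inner ℝ (u i) (u j) : ℝ) := by
  rw [← real_inner_self_eq_norm_sq, sum_inner]
  refine Finset.sum_congr rfl fun i _ => ?_
  rw [real_inner_smul_left, inner_sum, Finset.mul_sum]
  refine Finset.sum_congr rfl fun j _ => ?_
  rw [real_inner_smul_right]; ring

lemma sumDiffBound {H : Type*} [NormedAddCommGroup H] [InnerProductSpace ℝ H] {N : ℕ}
    (u v : Fin N → H) (a : Fin N → ℝ) (ς : ℝ) (hς : 0 ≤ ς)
    (hd : ∀ j, ‖u j - v j‖ ≤ ς) :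
    ‖∑ i, a i • u i - ∑ i, a i • v i‖
      ≤ Real.sqrt ((N : ℝ) * ∑ i, (a i) ^ 2) * ς := by
  have hrw : ∑ i, a i • u i - ∑ i, a i • v i = ∑ i, a i • (u i - v i) := by
    rw [← Finset.sum_sub_distrib]
    exact Finset.sum_congr rfl fun i _ => (smul_sub _ _ _).symm
  have h1 : ‖∑ i, a i • (u i - v i)‖ ≤ (∑ i, |a i|) * ς := by
    calc ‖∑ i, a i • (u i - v i)‖ ≤ ∑ i, ‖a i • (u i - v i)‖ := norm_sum_le _ _
      _ = ∑ i, |a i| * ‖u i - v i‖ := by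
          refine Finset.sum_congr rfl fun i _ => ?_
          rw [norm_smul, Real.norm_eq_abs]
      _ ≤ ∑ i, |a i| * ς := by
          refine Finset.sum_le_sum fun i _ => ?_
          exact mul_le_mul_of_nonneg_left (hd i) (abs_nonneg _)
      _ = (∑ i, |a i|) * ς := (Finset.sum_mul _ _ _).symm
  have h2 : (∑ i, |a i|) ^ 2 ≤ (N : ℝ) * ∑ i, (a i) ^ 2 := by
    have := sq_sum_le_card_mul_sum_sq (s := Finset.univ) (f := fun i => |a i|)
    simpa [sq_abs, Finset.card_univ] using this
  have h3 : (∑ i, |a i|) ≤ Real.sqrt ((N : ℝ) * ∑ i, (a i) ^ 2) := by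
    have habs : 0 ≤ ∑ i, |a i| := Finset.sum_nonneg fun i _ => abs_nonneg _
    calc (∑ i, |a i|) = Real.sqrt ((∑ i, |a i|) ^ 2) := (Real.sqrt_sq habs).symm
      _ ≤ _ := Real.sqrt_le_sqrt h2
  rw [hrw]
  exact h1.trans (mul_le_mul_of_nonneg_right h3 hς)

lemma distLem {H : Type*} [NormedAddCommGroup H] [InnerProductSpace ℝ H] {N : ℕ}
    (u v : Fin N → H) (c' : ℝ) (hc' : 0 < c')
    (hG : ∀ a : Fin N → ℝ, c' * ∑ i, (a i) ^ 2 ≤ ‖∑ i, a i • u i‖ ^ 2)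
    (ς : ℝ) (hς : 0 ≤ ς) (hd : ∀ j, ‖u j - v j‖ ≤ ς)
    [Submodule.HasOrthogonalProjection (Submodule.span ℝ (Set.range v))]
    (x : H) (hx : x ∈ Submodule.span ℝ (Set.range u)) :
    ‖x - Submodule.orthogonalProjectionOnto (Submodule.span ℝ (Set.range v)) x‖
      ≤ Real.sqrt ((N : ℝ) / c') * ς * ‖x‖ := by
  obtain ⟨a, ha⟩ := (Submodule.mem_span_range_iff_exists_fun ℝ).1 hx
  set S := ∑ i, (a i) ^ 2 with hSdef
  have hS0 : 0 ≤ S := Finset.sum_nonneg fun i _ => sq_nonneg _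
  have hG' : c' * S ≤ ‖x‖ ^ 2 := by rw [← ha]; exact hG a
  have hwV : ∑ i, a i • v i ∈ Submodule.span ℝ (Set.range v) :=
    Submodule.sum_mem _ fun i _ =>
      Submodule.smul_mem _ _ (Submodule.subset_span (Set.mem_range_self i))
  -- ‖x - P x‖ ≤ ‖x - w‖
  have hmin : ‖x - Submodule.orthogonalProjectionOnto (Submodule.span ℝ (Set.range v)) x‖
      ≤ ‖x - ∑ i, a i • v i‖ := by
    rw [← Submodule.starProjection_apply, Submodule.starProjection_minimal]
    exact ciInf_le ⟨0, by rintro r ⟨z, rfl⟩; exact norm_nonneg _⟩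
      (⟨∑ i, a i • v i, hwV⟩ : Submodule.span ℝ (Set.range v))
  have hbd : ‖x - ∑ i, a i • v i‖ ≤ Real.sqrt ((N : ℝ) * S) * ς := by
    rw [← ha]; exact sumDiffBound u v a ς hς hd
  have hsqS : Real.sqrt S ≤ ‖x‖ / Real.sqrt c' := by
    rw [div_eq_mul_inv, ← Real.sqrt_inv, ← Real.sqrt_sq (norm_nonneg x), ← Real.sqrt_mul
      (sq_nonneg _)]
    apply Real.sqrt_le_sqrt
    rw [← div_eq_mul_inv]
    exact (le_div_iff₀ hc').2 (by linarith)
  have hfin : Real.sqrt ((N : ℝ) * S) * ς ≤ Real.sqrt ((N : ℝ) / c') * ς * ‖x‖ := by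
    have h1 : Real.sqrt ((N : ℝ) * S) = Real.sqrt N * Real.sqrt S :=
      Real.sqrt_mul (Nat.cast_nonneg N) _
    have h2 : Real.sqrt ((N : ℝ) / c') = Real.sqrt N / Real.sqrt c' := by
      rw [Real.sqrt_div (Nat.cast_nonneg N)]
    have h3 : Real.sqrt N * Real.sqrt S ≤ Real.sqrt N * (‖x‖ / Real.sqrt c') :=
      mul_le_mul_of_nonneg_left hsqS (Real.sqrt_nonneg _)
    calc Real.sqrt ((N : ℝ) * S) * ς ≤ Real.sqrt N * (‖x‖ / Real.sqrt c') * ς := by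
          rw [h1]; exact mul_le_mul_of_nonneg_right h3 hς
      _ = Real.sqrt ((N : ℝ) / c') * ς * ‖x‖ := by rw [h2]; ring
  exact hmin.trans (hbd.trans hfin)

set_option maxHeartbeats 2000000 in
theorem stmt10 {H : Type*} [NormedAddCommGroup H] [InnerProductSpace ℝ H] [CompleteSpace H]
    (N : ℕ) (u : Fin N → H) (hu : LinearIndependent ℝ u)
    (c : ℝ) (hc : 0 < c)
    (hGram : ∀ x : Fin N → ℝ,
      c * ∑ i, (x i) ^ 2 ≤ ∑ i, ∑ j, x i * x j * (inner ℝ (u i) (u j) : ℝ)) :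
    ∃ ς₀ > (0:ℝ), ∃ C > (0:ℝ), ∀ ς : ℝ, 0 < ς → ς < ς₀ →
      ∀ v : Fin N → H, (∀ j, ‖u j - v j‖ < ς) →
        ∀ h : H,
          haveI : FiniteDimensional ℝ (Submodule.span ℝ (Set.range u)) :=
            FiniteDimensional.span_of_finite ℝ (Set.finite_range u)
          haveI : FiniteDimensional ℝ (Submodule.span ℝ (Set.range v)) :=
            FiniteDimensional.span_of_finite ℝ (Set.finite_range v)
          ‖(Submodule.orthogonalProjectionOnto (Submodule.span ℝ (Set.range u)) h : H) -
            (Submodule.orthogonalProjectionOnto (Submodule.span ℝ (Set.range v)) h : H)‖ ≤ C * ς * ‖h‖ := by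
  have hc2 : (0:ℝ) < c / 2 := by linarith
  have hsqlt : Real.sqrt (c / 2) < Real.sqrt c := by
    apply Real.sqrt_lt_sqrt hc2.le; linarith
  refine ⟨(Real.sqrt c - Real.sqrt (c / 2)) / (Real.sqrt N + 1),
    div_pos (by linarith) (by positivity),
    Real.sqrt ((N : ℝ) / c) + Real.sqrt ((N : ℝ) / (c / 2)) + 1, by positivity,
    fun ς hς hςς₀ v hv h => ?_⟩
  haveI : FiniteDimensional ℝ (Submodule.span ℝ (Set.range u)) :=
    FiniteDimensional.span_of_finite ℝ (Set.finite_range u)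
  haveI : FiniteDimensional ℝ (Submodule.span ℝ (Set.range v)) :=
    FiniteDimensional.span_of_finite ℝ (Set.finite_range v)
  set U := Submodule.span ℝ (Set.range u) with hU
  set V := Submodule.span ℝ (Set.range v) with hV
  have hdu : ∀ j, ‖u j - v j‖ ≤ ς := fun j => (hv j).le
  have hdv : ∀ j, ‖v j - u j‖ ≤ ς := fun j => by rw [norm_sub_rev]; exact (hv j).le
  have hGu : ∀ a : Fin N → ℝ, c * ∑ i, (a i) ^ 2 ≤ ‖∑ i, a i • u i‖ ^ 2 := by
    intro a; rw [normSqExpand]; exact hGram a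
  -- Gram bound for v
  have hςN : Real.sqrt N * ς ≤ Real.sqrt c - Real.sqrt (c / 2) := by
    have h1 : (Real.sqrt N + 1) * ς ≤ Real.sqrt c - Real.sqrt (c / 2) := by
      rw [← le_div_iff₀' (by positivity : (0:ℝ) < Real.sqrt N + 1)]
      exact hςς₀.le
    nlinarith [Real.sqrt_nonneg (N : ℝ)]
  have hGv : ∀ a : Fin N → ℝ, c / 2 * ∑ i, (a i) ^ 2 ≤ ‖∑ i, a i • v i‖ ^ 2 := by
    intro a
    set S := ∑ i, (a i) ^ 2 with hSdef
    have hS0 : 0 ≤ S := Finset.sum_nonneg fun i _ => sq_nonneg _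
    have h1 : ‖∑ i, a i • u i - ∑ i, a i • v i‖ ≤ Real.sqrt ((N : ℝ) * S) * ς :=
      sumDiffBound u v a ς hς.le hdu
    have h2 : Real.sqrt (c * S) ≤ ‖∑ i, a i • u i‖ := by
      rw [← Real.sqrt_sq (norm_nonneg _)]
      exact Real.sqrt_le_sqrt (hGu a)
    have h3 : ‖∑ i, a i • u i‖ - ‖∑ i, a i • v i‖ ≤ Real.sqrt ((N : ℝ) * S) * ς :=
      le_trans (norm_sub_norm_le _ _) h1
    have h4 : Real.sqrt (c / 2 * S) ≤ ‖∑ i, a i • v i‖ := by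
      have e1 : Real.sqrt (c * S) = Real.sqrt c * Real.sqrt S := Real.sqrt_mul hc.le _
      have e2 : Real.sqrt ((N : ℝ) * S) = Real.sqrt N * Real.sqrt S :=
        Real.sqrt_mul (Nat.cast_nonneg N) _
      have e3 : Real.sqrt (c / 2 * S) = Real.sqrt (c / 2) * Real.sqrt S :=
        Real.sqrt_mul hc2.le _
      have hsS : 0 ≤ Real.sqrt S := Real.sqrt_nonneg _
      nlinarith [hsS]
    calc c / 2 * S = Real.sqrt (c / 2 * S) ^ 2 := (Real.sq_sqrt (by positivity)).symm
      _ ≤ ‖∑ i, a i • v i‖ ^ 2 := by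
          have := h4; nlinarith [Real.sqrt_nonneg (c / 2 * S), norm_nonneg (∑ i, a i • v i)]
  -- main argument
  set a := (Submodule.orthogonalProjectionOnto U h : H) with hadef
  set b := (Submodule.orthogonalProjectionOnto V h : H) with hbdef
  set w := h - a with hwdef
  have haU : a ∈ U := (Submodule.orthogonalProjectionOnto U h).2
  have hwperp : w ∈ Uᗮ := Submodule.sub_starProjection_mem_orthogonal (K := U) h
  have hinner_aw : (inner ℝ a w : ℝ) = 0 := hwperp a haU
  have hnorm_sq : ‖h‖ ^ 2 = ‖a‖ ^ 2 + ‖w‖ ^ 2 := by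
    have : h = a + w := by rw [hwdef]; abel
    rw [this, norm_add_sq_real, hinner_aw]; ring
  have ha_le : ‖a‖ ≤ ‖h‖ := by nlinarith [norm_nonneg a, norm_nonneg h, norm_nonneg w]
  have hw_le : ‖w‖ ≤ ‖h‖ := by nlinarith [norm_nonneg a, norm_nonneg h, norm_nonneg w]
  -- term 1
  have hT1 : ‖a - Submodule.orthogonalProjectionOnto V a‖ ≤ Real.sqrt ((N : ℝ) / c) * ς * ‖a‖ :=
    distLem u v c hc hGu ς hς.le hdu a haU
  -- term 2
  set y := (Submodule.orthogonalProjectionOnto V w : H) with hydef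
  have hyV : y ∈ V := (Submodule.orthogonalProjectionOnto V w).2
  have hy_sq : ‖y‖ ^ 2 = (inner ℝ w y : ℝ) := by
    have hperp : w - y ∈ Vᗮ := Submodule.sub_starProjection_mem_orthogonal (K := V) w
    have h0 : (inner ℝ (w - y) y : ℝ) = 0 := by
      rw [real_inner_comm]; exact (Submodule.mem_orthogonal _ _ |>.1 hperp) y hyV
    have : (inner ℝ w y : ℝ) = (inner ℝ y y : ℝ) + (inner ℝ (w - y) y : ℝ) := by
      rw [← inner_add_left]; norm_num
    rw [this, h0, real_inner_self_eq_norm_sq]; ring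
  have hy_bound : ‖y‖ ≤ Real.sqrt ((N : ℝ) / (c / 2)) * ς * ‖w‖ := by
    have hyU : ‖y - Submodule.orthogonalProjectionOnto U y‖ ≤ Real.sqrt ((N : ℝ) / (c / 2)) * ς * ‖y‖ :=
      distLem v u (c / 2) hc2 hGv ς hς.le hdv y hyV
    have hPUy : (Submodule.orthogonalProjectionOnto U y : H) ∈ U := (Submodule.orthogonalProjectionOnto U y).2
    have h0 : (inner ℝ w (Submodule.orthogonalProjectionOnto U y : H) : ℝ) = 0 := by
      rw [real_inner_comm]; exact hwperp _ hPUy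
    have hsplit : (inner ℝ w y : ℝ) = (inner ℝ w (y - Submodule.orthogonalProjectionOnto U y) : ℝ) := by
      rw [inner_sub_right, h0]; ring
    have hcs : (inner ℝ w (y - Submodule.orthogonalProjectionOnto U y) : ℝ)
        ≤ ‖w‖ * ‖y - Submodule.orthogonalProjectionOnto U y‖ := real_inner_le_norm _ _
    have key : ‖y‖ ^ 2 ≤ ‖w‖ * (Real.sqrt ((N : ℝ) / (c / 2)) * ς * ‖y‖) := by
      rw [hy_sq, hsplit]
      exact hcs.trans (mul_le_mul_of_nonneg_left hyU (norm_nonneg w))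
    rcases eq_or_lt_of_le (norm_nonneg y) with hy0 | hy0
    · rw [← hy0]; positivity
    · have := (mul_le_mul_iff_left₀ hy0).1 (by nlinarith : ‖y‖ * ‖y‖ ≤ (Real.sqrt ((N : ℝ) / (c / 2)) * ς * ‖w‖) * ‖y‖)
      linarith
  -- combine
  have hb_split : b = (Submodule.orthogonalProjectionOnto V a : H) + y := by
    rw [hbdef, hydef, hwdef]
    have : h = a + (h - a) := by abel
    conv_lhs => rw [this]
    rw [map_add]; push_cast [Submodule.coe_add]; ring_nf
  have htri : ‖a - b‖ ≤ ‖a - Submodule.orthogonalProjectionOnto V a‖ + ‖y‖ := by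
    rw [hb_split]
    calc ‖a - ((Submodule.orthogonalProjectionOnto V a : H) + y)‖
        = ‖(a - Submodule.orthogonalProjectionOnto V a) - y‖ := by abel_nf
      _ ≤ _ := norm_sub_le _ _
  have hfin1 : ‖a - Submodule.orthogonalProjectionOnto V a‖ ≤ Real.sqrt ((N : ℝ) / c) * ς * ‖h‖ :=
    hT1.trans (by
      have : Real.sqrt ((N : ℝ) / c) * ς * ‖a‖ ≤ Real.sqrt ((N : ℝ) / c) * ς * ‖h‖ := by
        apply mul_le_mul_of_nonneg_left ha_le; positivity
      exact this)
  have hfin2 : ‖y‖ ≤ Real.sqrt ((N : ℝ) / (c / 2)) * ς * ‖h‖ :=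
    hy_bound.trans (by
      apply mul_le_mul_of_nonneg_left hw_le; positivity)
  calc ‖a - b‖ ≤ ‖a - Submodule.orthogonalProjectionOnto V a‖ + ‖y‖ := htri
    _ ≤ Real.sqrt ((N : ℝ) / c) * ς * ‖h‖ + Real.sqrt ((N : ℝ) / (c / 2)) * ς * ‖h‖ :=
        add_le_add hfin1 hfin2
    _ ≤ (Real.sqrt ((N : ℝ) / c) + Real.sqrt ((N : ℝ) / (c / 2)) + 1) * ς * ‖h‖ := by
        have hςh : 0 ≤ ς * ‖h‖ := by positivity
        nlinarith
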